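/- Fix n ≥ 4. Let F' be the free abelian group on the set {A ⊆ ZMod n : 0 ∈ A, 2 ≤ |A| ≤ n−2} with generators δ_A, and let R' ≤ F' be the subgroup generated by the elements r_{m,p} described below, for each m ∈ ZMod n and 1 ≤ p ≤ n−3. Then F'/R' is a free abelian group, and the images of the generators δ_A with A non-adjacent form a ℤ-basis; in particular F'/R' has rank 2^(n−1) − 1 − n(n−1)/2. -/

import Mathlib

open scoped Classical

/-- A subset `A ⊆ ZMod n` is a cyclic interval if `A = {a, a+1, …, a+(k−1)}`
for some `a ∈ ZMod n` and `k ≥ 1` (addition in `ZMod n`). -/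
def IsCyclicInterval {n : ℕ} (A : Finset (ZMod n)) : Prop :=
  ∃ (a : ZMod n) (k : ℕ), 1 ≤ k ∧ A = (Finset.range k).image (fun i : ℕ => a + (i : ZMod n))

/-- The index set `Dn = {A ⊆ ZMod n : 2 ≤ |A| ≤ n−2}` of boundary divisors. -/
abbrev DivIdx (n : ℕ) := {A : Finset (ZMod n) // 2 ≤ A.card ∧ A.card ≤ n - 2}

/-- The complement, as an element of `Dn`. -/
noncomputable def complIdx (n : ℕ) (hn : 4 ≤ n) (A : DivIdx n) : DivIdx n :=
  haveI : NeZero n := ⟨by omega⟩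
  ⟨(A : Finset (ZMod n))ᶜ, by
    have h1 := A.prop.1
    have h2 := A.prop.2
    have hc : (A : Finset (ZMod n))ᶜ.card = n - (A : Finset (ZMod n)).card := by
      rw [Finset.card_compl, ZMod.card]
    omega⟩

/-- The Keel relation element associated to four (pairwise distinct) points
`i, j, k, l`: `(Σ_{A : i,j∈A, k,l∉A} δ_A) − (Σ_{A : i,k∈A, j,l∉A} δ_A)`. -/
noncomputable def keelElt (n : ℕ) (hn : 4 ≤ n) (i j k l : ZMod n) :
    FreeAbelianGroup (DivIdx n) :=
  haveI : NeZero n := ⟨by omega⟩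
  (∑ A ∈ Finset.univ.filter (fun A : DivIdx n =>
      i ∈ A.val ∧ j ∈ A.val ∧ k ∉ A.val ∧ l ∉ A.val), FreeAbelianGroup.of A)
  - (∑ A ∈ Finset.univ.filter (fun A : DivIdx n =>
      i ∈ A.val ∧ k ∈ A.val ∧ j ∉ A.val ∧ l ∉ A.val), FreeAbelianGroup.of A)

/-- The subgroup `R` of relations of the Keel presentation: generated by
`δ_A − δ_{A^c}` for `A ∈ Dn`, together with the Keel relations for every four
pairwise distinct points `i, j, k, l ∈ ZMod n`. -/
noncomputable def KeelRelations (n : ℕ) (hn : 4 ≤ n) :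
    AddSubgroup (FreeAbelianGroup (DivIdx n)) :=
  AddSubgroup.closure
    ({x | ∃ A : DivIdx n, x = FreeAbelianGroup.of A - FreeAbelianGroup.of (complIdx n hn A)} ∪
     {x | ∃ i j k l : ZMod n, i ≠ j ∧ i ≠ k ∧ i ≠ l ∧ j ≠ k ∧ j ≠ l ∧ k ≠ l ∧
        x = keelElt n hn i j k l})

/-- The Keel presentation group `G(n) = F/R` of `Pic(M̄_{0,n})`. -/
abbrev KeelGroup (n : ℕ) (hn : 4 ≤ n) :=
  FreeAbelianGroup (DivIdx n) ⧸ KeelRelations n hn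


/-- The index set of generators of `F'`: subsets `A ⊆ ZMod n` with `0 ∈ A` and
`2 ≤ |A| ≤ n−2`. -/
abbrev D0Idx (n : ℕ) := {A : Finset (ZMod n) //
  (0 : ZMod n) ∈ A ∧ 2 ≤ A.card ∧ A.card ≤ n - 2}

/-- For `X ⊆ ZMod n` with `2 ≤ |X| ≤ n−2`, `X*` is the unique member of `{X, Xᶜ}`
containing `0`, as an element of `D0Idx n`. -/
noncomputable def starIdx (n : ℕ) (hn : 4 ≤ n) (X : Finset (ZMod n))
    (h : 2 ≤ X.card ∧ X.card ≤ n - 2) : D0Idx n :=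
  haveI : NeZero n := ⟨by omega⟩
  if h0 : (0 : ZMod n) ∈ X then ⟨X, h0, h⟩
  else
    ⟨Xᶜ, by
      have hc : Xᶜ.card = n - X.card := by rw [Finset.card_compl, ZMod.card]
      exact ⟨Finset.mem_compl.mpr h0, by omega, by omega⟩⟩

/-- The cyclic interval `{m, m+1, …, m+p}` has `p+1` elements when `p ≤ n−3`. -/
lemma interval_card (n : ℕ) (hn : 4 ≤ n) (m : ZMod n) (p : ℕ) (hp2 : p ≤ n - 3) :
    ((Finset.range (p + 1)).image (fun i : ℕ => m + (i : ZMod n))).card = p + 1 := by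
  rw [Finset.card_image_of_injOn, Finset.card_range]
  intro i hi j hj hij
  simp only [Finset.coe_range, Set.mem_Iio] at hi hj
  have hc : (i : ZMod n) = (j : ZMod n) := add_left_cancel hij
  have hmod : i % n = j % n := (ZMod.natCast_eq_natCast_iff i j n).mp hc
  rw [Nat.mod_eq_of_lt (by omega), Nat.mod_eq_of_lt (by omega)] at hmod
  exact hmod

/-- The relation element `r_{m,p} = δ_{I*} − Σ_{A ∈ L} δ_{A*} + Σ_{A ∈ K} δ_{A*}`
in `F'`, for `I = {m, …, m+p}`,
`L = {A : 2 ≤ |A| ≤ n−2, m−1 ∈ A, m+p ∈ A, m ∉ A, m+p+1 ∉ A}` and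
`K = {A : 2 ≤ |A| ≤ n−2, m−1 ∈ A, m+p+1 ∈ A, m ∉ A, m+p ∉ A, A ≠ Iᶜ}`. -/
noncomputable def relElt (n : ℕ) (hn : 4 ≤ n) (m : ZMod n) (p : ℕ)
    (hp1 : 1 ≤ p) (hp2 : p ≤ n - 3) : FreeAbelianGroup (D0Idx n) :=
  haveI : NeZero n := ⟨by omega⟩
  FreeAbelianGroup.of (starIdx n hn
      ((Finset.range (p + 1)).image (fun i : ℕ => m + (i : ZMod n)))
      (by rw [interval_card n hn m p hp2]; omega))
  - (∑ A ∈ Finset.univ.filter (fun A : DivIdx n =>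
        m - 1 ∈ A.val ∧ m + (p : ZMod n) ∈ A.val ∧ m ∉ A.val ∧
          m + (p : ZMod n) + 1 ∉ A.val),
      FreeAbelianGroup.of (starIdx n hn A.val A.prop))
  + (∑ A ∈ Finset.univ.filter (fun A : DivIdx n =>
        m - 1 ∈ A.val ∧ m + (p : ZMod n) + 1 ∈ A.val ∧ m ∉ A.val ∧
          m + (p : ZMod n) ∉ A.val ∧
          A.val ≠ ((Finset.range (p + 1)).image (fun i : ℕ => m + (i : ZMod n)))ᶜ),
      FreeAbelianGroup.of (starIdx n hn A.val A.prop))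

/-- The subgroup `R' ≤ F'` generated by the relation elements `r_{m,p}`. -/
noncomputable def NewRelations (n : ℕ) (hn : 4 ≤ n) :
    AddSubgroup (FreeAbelianGroup (D0Idx n)) :=
  AddSubgroup.closure
    {x | ∃ (m : ZMod n) (p : ℕ) (hp1 : 1 ≤ p) (hp2 : p ≤ n - 3),
      x = relElt n hn m p hp1 hp2}

/-- Non-adjacent subsets of `ZMod n` containing `0`. -/
abbrev NAIdx (n : ℕ) := {A : Finset (ZMod n) //
  (0 : ZMod n) ∈ A ∧ 2 ≤ A.card ∧ A.card ≤ n - 2 ∧ ¬ IsCyclicInterval A}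

namespace NP
variable {n : ℕ}

/-- interval set -/
def IntSet (n : ℕ) (a : ZMod n) (k : ℕ) : Finset (ZMod n) :=
  (Finset.range k).image (fun i : ℕ => a + (i : ZMod n))

lemma mem_intSet [NeZero n] {a x : ZMod n} {k : ℕ} (hk : k ≤ n) :
    x ∈ IntSet n a k ↔ (x - a).val < k := by
  constructor
  · rintro hx
    simp only [IntSet, Finset.mem_image, Finset.mem_range] at hx
    obtain ⟨i, hi, rfl⟩ := hx
    have : (a + (i:ZMod n) - a) = (i : ZMod n) := by ring
    rw [this, ZMod.val_cast_of_lt (by omega)]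
    exact hi
  · intro h
    simp only [IntSet, Finset.mem_image, Finset.mem_range]
    exact ⟨(x - a).val, h, by rw [ZMod.natCast_rightInverse (x - a)]; ring⟩

lemma card_intSet [NeZero n] {a : ZMod n} {k : ℕ} (hk : k ≤ n) :
    (IntSet n a k).card = k := by
  rw [IntSet, Finset.card_image_of_injOn, Finset.card_range]
  intro i hi j hj hij
  simp only [Finset.coe_range, Set.mem_Iio] at hi hj
  have hc : (i : ZMod n) = (j : ZMod n) := add_left_cancel hij
  have hmod : i % n = j % n := (ZMod.natCast_eq_natCast_iff i j n).mp hc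
  rwa [Nat.mod_eq_of_lt (by omega), Nat.mod_eq_of_lt (by omega)] at hmod

lemma isCyclicInterval_iff [NeZero n] {A : Finset (ZMod n)} (h2 : 2 ≤ A.card)
    (hcard : A.card ≤ n - 2) :
    IsCyclicInterval A ↔ ∃ a, A = IntSet n a A.card := by
  have hn : 2 ≤ n := by
    have := A.card_le_univ
    have : A.card ≤ n := by simpa [ZMod.card] using this
    omega
  constructor
  · rintro ⟨a, k, hk1, hA⟩
    have hA' : A = IntSet n a k := hA
    by_cases hkn : k ≤ n
    · exact ⟨a, by rw [hA', card_intSet hkn]⟩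
    · exfalso
      have hsub : (IntSet n a n) ⊆ IntSet n a k :=
        Finset.image_subset_image (Finset.range_subset_range.mpr (by omega))
      have huniv : IntSet n a n = Finset.univ :=
        Finset.eq_univ_of_card _ (by rw [card_intSet le_rfl, ZMod.card])
      have hle := Finset.card_le_card (huniv ▸ hsub)
      rw [← hA'] at hle
      simp only [Finset.card_univ, ZMod.card] at hle
      omega
  · rintro ⟨a, ha⟩
    exact ⟨a, A.card, by omega, ha⟩

end NP

namespace NP
variable {n : ℕ}

lemma val_add_one' [NeZero n] (z : ZMod n) : (z + 1).val = (z.val + 1) % n := by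
  have h : z + 1 = ((z.val + 1 : ℕ) : ZMod n) := by
    push_cast
    rw [ZMod.natCast_rightInverse z]
  rw [h, ZMod.val_natCast]

lemma left_edge [NeZero n] {a x : ZMod n} {k : ℕ} (hk1 : 1 ≤ k) (hkn : k ≤ n)
    (hx : x ∈ IntSet n a k) (hx1 : x + 1 ∉ IntSet n a k) : (x - a).val = k - 1 := by
  have hu := (mem_intSet hkn).mp hx
  have hu1 : ¬ ((x + 1 - a).val < k) := fun h => hx1 ((mem_intSet hkn).mpr h)
  have he : x + 1 - a = (x - a) + 1 := by ring
  rw [he, val_add_one'] at hu1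
  have hun : (x - a).val < n := ZMod.val_lt _
  by_cases hc : (x - a).val + 1 < n
  · rw [Nat.mod_eq_of_lt hc] at hu1; omega
  · have : (x - a).val + 1 = n := by omega
    rw [this, Nat.mod_self] at hu1; omega

lemma right_edge [NeZero n] {a x : ZMod n} {k : ℕ} (hk1 : 1 ≤ k) (hkn : k ≤ n)
    (hx : x ∉ IntSet n a k) (hx1 : x + 1 ∈ IntSet n a k) : (x - a).val = n - 1 := by
  have hu : ¬ ((x - a).val < k) := fun h => hx ((mem_intSet hkn).mpr h)
  have hu1 := (mem_intSet hkn).mp hx1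
  have he : x + 1 - a = (x - a) + 1 := by ring
  rw [he, val_add_one'] at hu1
  have hun : (x - a).val < n := ZMod.val_lt _
  by_cases hc : (x - a).val + 1 < n
  · rw [Nat.mod_eq_of_lt hc] at hu1; omega
  · omega

lemma compl_intSet [NeZero n] {a : ZMod n} {k : ℕ} (hk1 : 1 ≤ k) (hkn : k ≤ n) :
    (IntSet n a k)ᶜ = IntSet n (a + (k : ZMod n)) (n - k) := by
  ext x
  rw [Finset.mem_compl, mem_intSet hkn, mem_intSet (by omega : n - k ≤ n)]
  have hxk : x - (a + (k:ZMod n)) = (x - a) - (k:ZMod n) := by ring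
  rw [hxk]
  set u := (x - a).val with hu
  have hun : u < n := ZMod.val_lt _
  have hxa : x - a = (u : ZMod n) := (ZMod.natCast_rightInverse _).symm
  by_cases hcase : k ≤ u
  · have h2 : (x - a) - (k:ZMod n) = ((u - k : ℕ) : ZMod n) := by
      rw [hxa, Nat.cast_sub hcase]
    rw [h2, ZMod.val_cast_of_lt (by omega)]
    omega
  · have h2 : (x - a) - (k:ZMod n) = ((u + n - k : ℕ) : ZMod n) := by
      rw [hxa, Nat.cast_sub (by omega : k ≤ u + n), Nat.cast_add, ZMod.natCast_self]
      ring
    rw [h2, ZMod.val_cast_of_lt (by omega)]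
    omega

lemma intSet_isCyclicInterval {a : ZMod n} {k : ℕ} (hk1 : 1 ≤ k) :
    IsCyclicInterval (IntSet n a k) := ⟨a, k, hk1, rfl⟩

lemma isCyclicInterval_compl [NeZero n] {A : Finset (ZMod n)} (h2 : 2 ≤ A.card)
    (hcard : A.card ≤ n - 2) (hn2 : 2 ≤ n) (h : IsCyclicInterval A) :
    IsCyclicInterval Aᶜ := by
  obtain ⟨a, hA⟩ := (isCyclicInterval_iff h2 hcard).mp h
  rw [hA, compl_intSet (by omega) (by omega)]
  exact intSet_isCyclicInterval (by omega)

lemma mem_self [NeZero n] {m : ZMod n} {k : ℕ} (hk1 : 1 ≤ k) (hkn : k ≤ n) :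
    m ∈ IntSet n m k := by
  rw [mem_intSet hkn, sub_self, ZMod.val_zero]; omega

lemma pred_not_mem [NeZero n] {m : ZMod n} {k : ℕ} (hkn : k ≤ n - 1) :
    m - 1 ∉ IntSet n m k := by
  intro h
  rw [mem_intSet (by omega)] at h
  have he : m - 1 - m = ((n - 1 : ℕ) : ZMod n) := by
    rw [Nat.cast_sub (by have := NeZero.pos n; omega : 1 ≤ n), ZMod.natCast_self]
    push_cast; ring
  rw [he, ZMod.val_cast_of_lt (by have := NeZero.pos n; omega)] at h
  omega

lemma intSet_start [NeZero n] {a m : ZMod n} {k : ℕ} (hk1 : 1 ≤ k) (hkn : k ≤ n - 1)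
    (hm : m ∈ IntSet n a k) (hm1 : m - 1 ∉ IntSet n a k) : m = a := by
  have h := right_edge hk1 (by omega) hm1 (by rwa [sub_add_cancel])
  have he : m - 1 - a = ((n - 1 : ℕ) : ZMod n) := by
    rw [← h, ZMod.natCast_rightInverse]
  rw [Nat.cast_sub (by have := NeZero.pos n; omega : 1 ≤ n), ZMod.natCast_self] at he
  push_cast at he
  linear_combination he

lemma intSet_inj [NeZero n] {a a' : ZMod n} {k k' : ℕ} (hk1 : 1 ≤ k) (hkn : k ≤ n - 1)
    (hk1' : 1 ≤ k') (hkn' : k' ≤ n - 1) (h : IntSet n a k = IntSet n a' k') :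
    a = a' ∧ k = k' := by
  have hcard : k = k' := by
    have := congrArg Finset.card h
    rwa [card_intSet (by omega), card_intSet (by omega)] at this
  subst hcard
  refine ⟨?_, rfl⟩
  have hm : a ∈ IntSet n a' k := h ▸ mem_self hk1 (by omega)
  have hm1 : a - 1 ∉ IntSet n a' k := h ▸ pred_not_mem hkn
  exact intSet_start hk1 hkn hm hm1

end NP

namespace NP
variable {n : ℕ}

lemma cast_eq_of_val_eq [NeZero n] {x y : ZMod n} (h : x.val = y.val) : x = y := by
  rw [← ZMod.natCast_rightInverse x, ← ZMod.natCast_rightInverse y, h]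

lemma no_interval_L [NeZero n] {A : Finset (ZMod n)} (h2 : 2 ≤ A.card) (hc : A.card ≤ n - 2)
    {m : ZMod n} {p : ℕ} (hp1 : 1 ≤ p) (hp2 : p ≤ n - 3) (hn4 : 4 ≤ n)
    (hL1 : m - 1 ∈ A) (hL2 : m + (p : ZMod n) ∈ A) (hL3 : m ∉ A)
    (hL4 : m + (p : ZMod n) + 1 ∉ A) : ¬ IsCyclicInterval A := by
  intro hI
  obtain ⟨a, hA⟩ := (isCyclicInterval_iff h2 hc).mp hI
  set k := A.card with hk
  rw [hA] at hL1 hL2 hL3 hL4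
  have e1 : (m - 1 - a).val = k - 1 :=
    left_edge (by omega) (by omega) hL1 (by rwa [sub_add_cancel])
  have e2 : (m + (p : ZMod n) - a).val = k - 1 :=
    left_edge (by omega) (by omega) hL2 hL4
  have heq : m - 1 - a = m + (p : ZMod n) - a := cast_eq_of_val_eq (e1.trans e2.symm)
  have hp' : ((p : ℕ) : ZMod n) = ((n - 1 : ℕ) : ZMod n) := by
    rw [Nat.cast_sub (by omega : 1 ≤ n), ZMod.natCast_self]
    push_cast
    linear_combination -heq
  have := (ZMod.natCast_eq_natCast_iff' p (n-1) n).mp hp'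
  rw [Nat.mod_eq_of_lt (by omega), Nat.mod_eq_of_lt (by omega)] at this
  omega

lemma interval_K_eq [NeZero n] {A : Finset (ZMod n)} (h2 : 2 ≤ A.card) (hc : A.card ≤ n - 2)
    {m : ZMod n} {p : ℕ} (hp1 : 1 ≤ p) (hp2 : p ≤ n - 3) (hn4 : 4 ≤ n)
    (hK1 : m - 1 ∈ A) (hK2 : m + (p : ZMod n) + 1 ∈ A) (hK3 : m ∉ A)
    (hK4 : m + (p : ZMod n) ∉ A) (hI : IsCyclicInterval A) :
    A = (IntSet n m (p + 1))ᶜ := by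
  obtain ⟨a, hA⟩ := (isCyclicInterval_iff h2 hc).mp hI
  set k := A.card with hk
  rw [hA] at hK1 hK2 hK3 hK4
  have e1 : (m - 1 - a).val = k - 1 :=
    left_edge (by omega) (by omega) hK1 (by rwa [sub_add_cancel])
  have e2 : (m + (p : ZMod n) - a).val = n - 1 :=
    right_edge (by omega) (by omega) hK4 hK2
  -- a = m + p + 1
  have ha : a = m + (p : ZMod n) + 1 := by
    have : m + (p : ZMod n) - a = ((n - 1 : ℕ) : ZMod n) := by
      rw [← e2, ZMod.natCast_rightInverse]
    rw [Nat.cast_sub (by omega : 1 ≤ n), ZMod.natCast_self] at this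
    push_cast at this
    linear_combination -this
  -- k = n - p - 1
  have hval : (m - 1 - a).val = n - p - 2 := by
    rw [ha]
    have : m - 1 - (m + (p : ZMod n) + 1) = ((n - p - 2 : ℕ) : ZMod n) := by
      rw [Nat.cast_sub (by omega : 2 ≤ n - p), Nat.cast_sub (by omega : p ≤ n), ZMod.natCast_self]
      push_cast
      ring
    rw [this, ZMod.val_cast_of_lt (by omega)]
  have hkval : k = n - p - 1 := by omega
  have ha' : a = m + ((p + 1 : ℕ) : ZMod n) := by push_cast; rw [ha]; ring
  rw [hA, ha', hkval, compl_intSet (by omega : 1 ≤ p + 1) (by omega : p + 1 ≤ n)]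
  have : n - (p + 1) = n - p - 1 := by omega
  rw [this]

end NP

namespace NP

lemma compl_bounds (n : ℕ) [NeZero n] {X : Finset (ZMod n)}
    (h : 2 ≤ X.card ∧ X.card ≤ n - 2) : 2 ≤ Xᶜ.card ∧ Xᶜ.card ≤ n - 2 := by
  have hc : Xᶜ.card = n - X.card := by rw [Finset.card_compl, ZMod.card]
  have hle : X.card ≤ n := by
    have := X.card_le_univ; simpa [ZMod.card] using this
  have : 1 ≤ n := NeZero.pos n
  omega

lemma starIdx_val (n : ℕ) (hn : 4 ≤ n) [NeZero n] {X : Finset (ZMod n)}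
    (h : 2 ≤ X.card ∧ X.card ≤ n - 2) :
    (starIdx n hn X h).val = if (0 : ZMod n) ∈ X then X else Xᶜ := by
  by_cases h0 : (0 : ZMod n) ∈ X
  · rw [if_pos h0]; simp only [starIdx, dif_pos h0]
  · rw [if_neg h0]; simp only [starIdx, dif_neg h0]

lemma starIdx_of_mem (n : ℕ) (hn : 4 ≤ n) [NeZero n] {X : Finset (ZMod n)}
    (h : 2 ≤ X.card ∧ X.card ≤ n - 2) (h0 : (0 : ZMod n) ∈ X) :
    (starIdx n hn X h).val = X := by
  rw [starIdx_val, if_pos h0]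

lemma starIdx_compl (n : ℕ) (hn : 4 ≤ n) [NeZero n] {X : Finset (ZMod n)}
    (h : 2 ≤ X.card ∧ X.card ≤ n - 2) (h' : 2 ≤ Xᶜ.card ∧ Xᶜ.card ≤ n - 2) :
    starIdx n hn Xᶜ h' = starIdx n hn X h := by
  apply Subtype.ext
  rw [starIdx_val, starIdx_val]
  by_cases h0 : (0 : ZMod n) ∈ X
  · rw [if_neg (by simp [h0]), if_pos h0, compl_compl]
  · rw [if_pos (Finset.mem_compl.mpr h0), if_neg h0]

lemma starIdx_not_interval (n : ℕ) (hn : 4 ≤ n) [NeZero n] {X : Finset (ZMod n)}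
    (h : 2 ≤ X.card ∧ X.card ≤ n - 2) (hX : ¬ IsCyclicInterval X) :
    ¬ IsCyclicInterval (starIdx n hn X h).val := by
  rw [starIdx_val]
  by_cases h0 : (0 : ZMod n) ∈ X
  · rwa [if_pos h0]
  · rw [if_neg h0]
    intro hc
    apply hX
    have h' := compl_bounds n h
    have := isCyclicInterval_compl h'.1 h'.2 (by omega) hc
    rwa [compl_compl] at this

lemma starIdx_interval (n : ℕ) (hn : 4 ≤ n) [NeZero n] {X : Finset (ZMod n)}
    (h : 2 ≤ X.card ∧ X.card ≤ n - 2) (hX : IsCyclicInterval X) :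
    IsCyclicInterval (starIdx n hn X h).val := by
  rw [starIdx_val]
  by_cases h0 : (0 : ZMod n) ∈ X
  · rwa [if_pos h0]
  · rw [if_neg h0]
    exact isCyclicInterval_compl h.1 h.2 (by omega) hX

/-- The `L` index set. -/
noncomputable def FL (n : ℕ) (hn : 4 ≤ n) (m : ZMod n) (p : ℕ) : Finset (DivIdx n) :=
  haveI : NeZero n := ⟨by omega⟩
  Finset.univ.filter (fun A : DivIdx n =>
    m - 1 ∈ A.val ∧ m + (p : ZMod n) ∈ A.val ∧ m ∉ A.val ∧ m + (p : ZMod n) + 1 ∉ A.val)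

/-- The `K` index set. -/
noncomputable def FK (n : ℕ) (hn : 4 ≤ n) (m : ZMod n) (p : ℕ) : Finset (DivIdx n) :=
  haveI : NeZero n := ⟨by omega⟩
  Finset.univ.filter (fun A : DivIdx n =>
    m - 1 ∈ A.val ∧ m + (p : ZMod n) + 1 ∈ A.val ∧ m ∉ A.val ∧ m + (p : ZMod n) ∉ A.val ∧
      A.val ≠ (IntSet n m (p + 1))ᶜ)

noncomputable def termLs (n : ℕ) (hn : 4 ≤ n) (m : ZMod n) (p : ℕ) :
    FreeAbelianGroup (D0Idx n) :=
  ∑ A ∈ FL n hn m p, FreeAbelianGroup.of (starIdx n hn A.val A.prop)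

noncomputable def termKs (n : ℕ) (hn : 4 ≤ n) (m : ZMod n) (p : ℕ) :
    FreeAbelianGroup (D0Idx n) :=
  ∑ A ∈ FK n hn m p, FreeAbelianGroup.of (starIdx n hn A.val A.prop)

lemma relElt_eq (n : ℕ) (hn : 4 ≤ n) [NeZero n] (m : ZMod n) (p : ℕ)
    (hp1 : 1 ≤ p) (hp2 : p ≤ n - 3) :
    relElt n hn m p hp1 hp2
      = FreeAbelianGroup.of (starIdx n hn (IntSet n m (p + 1))
          (by rw [card_intSet (by omega : p + 1 ≤ n)]; omega))
        - termLs n hn m p + termKs n hn m p := rfl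

/-- Non-adjacent indices as a subtype of `D0Idx`. -/
def NAsub (n : ℕ) := {A : D0Idx n // ¬ IsCyclicInterval A.val}

noncomputable def piNA (n : ℕ) : FreeAbelianGroup (D0Idx n) →+ FreeAbelianGroup (NAsub n) :=
  FreeAbelianGroup.lift (fun B => if h : IsCyclicInterval B.val then 0
    else FreeAbelianGroup.of (⟨B, h⟩ : NAsub n))

noncomputable def emb (n : ℕ) : FreeAbelianGroup (NAsub n) →+ FreeAbelianGroup (D0Idx n) :=
  FreeAbelianGroup.lift (fun j => FreeAbelianGroup.of j.val)

noncomputable def T (n : ℕ) (hn : 4 ≤ n) (m : ZMod n) (p : ℕ) :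
    FreeAbelianGroup (NAsub n) :=
  piNA n (termLs n hn m p) - piNA n (termKs n hn m p)

lemma mem_FL (n : ℕ) (hn : 4 ≤ n) {m : ZMod n} {p : ℕ} {A : DivIdx n} :
    A ∈ FL n hn m p ↔ (m - 1 ∈ A.val ∧ m + (p : ZMod n) ∈ A.val ∧ m ∉ A.val ∧
      m + (p : ZMod n) + 1 ∉ A.val) := by
  haveI : NeZero n := ⟨by omega⟩
  simp only [FL, Finset.mem_filter, Finset.mem_univ, true_and]

lemma mem_FK (n : ℕ) (hn : 4 ≤ n) [NeZero n] {m : ZMod n} {p : ℕ} {A : DivIdx n} :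
    A ∈ FK n hn m p ↔ (m - 1 ∈ A.val ∧ m + (p : ZMod n) + 1 ∈ A.val ∧ m ∉ A.val ∧
      m + (p : ZMod n) ∉ A.val ∧ A.val ≠ (IntSet n m (p + 1))ᶜ) := by
  simp only [FK, Finset.mem_filter, Finset.mem_univ, true_and]

lemma L_not_int (n : ℕ) (hn : 4 ≤ n) {m : ZMod n} {p : ℕ} (hp1 : 1 ≤ p) (hp2 : p ≤ n - 3)
    {A : DivIdx n} (hA : A ∈ FL n hn m p) : ¬ IsCyclicInterval A.val := by
  haveI : NeZero n := ⟨by omega⟩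
  rw [mem_FL] at hA
  exact no_interval_L A.prop.1 A.prop.2 hp1 hp2 hn hA.1 hA.2.1 hA.2.2.1 hA.2.2.2

lemma K_not_int (n : ℕ) (hn : 4 ≤ n) {m : ZMod n} {p : ℕ} (hp1 : 1 ≤ p) (hp2 : p ≤ n - 3)
    {A : DivIdx n} (hA : A ∈ FK n hn m p) : ¬ IsCyclicInterval A.val := by
  haveI : NeZero n := ⟨by omega⟩
  rw [mem_FK] at hA
  intro hI
  exact hA.2.2.2.2 (interval_K_eq A.prop.1 A.prop.2 hp1 hp2 hn hA.1 hA.2.1 hA.2.2.1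
    hA.2.2.2.1 hI)

lemma emb_pi_of (n : ℕ) {B : D0Idx n} (h : ¬ IsCyclicInterval B.val) :
    emb n (piNA n (FreeAbelianGroup.of B)) = FreeAbelianGroup.of B := by
  rw [piNA, FreeAbelianGroup.lift_apply_of, dif_neg h, emb]
  exact FreeAbelianGroup.lift_apply_of _ _

lemma emb_pi_termLs (n : ℕ) (hn : 4 ≤ n) (m : ZMod n) (p : ℕ) (hp1 : 1 ≤ p)
    (hp2 : p ≤ n - 3) : emb n (piNA n (termLs n hn m p)) = termLs n hn m p := by
  haveI : NeZero n := ⟨by omega⟩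
  rw [termLs, map_sum, map_sum]
  exact Finset.sum_congr rfl (fun A hA => emb_pi_of n
    (starIdx_not_interval n hn A.prop (L_not_int n hn hp1 hp2 hA)))

lemma emb_pi_termKs (n : ℕ) (hn : 4 ≤ n) (m : ZMod n) (p : ℕ) (hp1 : 1 ≤ p)
    (hp2 : p ≤ n - 3) : emb n (piNA n (termKs n hn m p)) = termKs n hn m p := by
  haveI : NeZero n := ⟨by omega⟩
  rw [termKs, map_sum, map_sum]
  exact Finset.sum_congr rfl (fun A hA => emb_pi_of n
    (starIdx_not_interval n hn A.prop (K_not_int n hn hp1 hp2 hA)))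

lemma cast_np2 (n : ℕ) (hn : 4 ≤ n) [NeZero n] {p : ℕ} (hp2 : p ≤ n - 3) :
    ((n - p - 2 : ℕ) : ZMod n) = - (p : ZMod n) - 2 := by
  rw [show n - p - 2 = n - (p + 2) by omega, Nat.cast_sub (by omega), ZMod.natCast_self]
  push_cast; ring

lemma compl_I (n : ℕ) (hn : 4 ≤ n) [NeZero n] (m : ZMod n) (p : ℕ) (hp1 : 1 ≤ p)
    (hp2 : p ≤ n - 3) :
    (IntSet n m (p + 1))ᶜ = IntSet n (m + (p : ZMod n) + 1) (n - p - 2 + 1) := by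
  rw [compl_intSet (by omega) (by omega : p + 1 ≤ n)]
  have h1 : m + ((p + 1 : ℕ) : ZMod n) = m + (p : ZMod n) + 1 := by push_cast; ring
  have h2 : n - (p + 1) = n - p - 2 + 1 := by omega
  rw [h1, h2]

lemma FL_compl (n : ℕ) (hn : 4 ≤ n) (m : ZMod n) (p : ℕ) (hp1 : 1 ≤ p) (hp2 : p ≤ n - 3) :
    FL n hn (m + (p : ZMod n) + 1) (n - p - 2) = FL n hn m p := by
  haveI : NeZero n := ⟨by omega⟩
  unfold FL
  apply Finset.filter_congr
  intro A _
  have e1 : m + (p : ZMod n) + 1 - 1 = m + (p : ZMod n) := by ring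
  have e2 : m + (p : ZMod n) + 1 + ((n - p - 2 : ℕ) : ZMod n) = m - 1 := by
    rw [cast_np2 n hn hp2]; ring
  have e4 : m - 1 + 1 = m := by ring
  rw [e1, e2, e4]
  tauto

lemma mem_FK_compl (n : ℕ) (hn : 4 ≤ n) [NeZero n] {m : ZMod n} {p : ℕ} (hp1 : 1 ≤ p)
    (hp2 : p ≤ n - 3) {A : DivIdx n} :
    A ∈ FK n hn (m + (p : ZMod n) + 1) (n - p - 2) ↔
      (m + (p : ZMod n) ∈ A.val ∧ m ∈ A.val ∧ m + (p : ZMod n) + 1 ∉ A.val ∧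
        m - 1 ∉ A.val ∧ A.val ≠ IntSet n m (p + 1)) := by
  rw [mem_FK n hn]
  have e1 : m + (p : ZMod n) + 1 - 1 = m + (p : ZMod n) := by ring
  have e2 : m + (p : ZMod n) + 1 + ((n - p - 2 : ℕ) : ZMod n) = m - 1 := by
    rw [cast_np2 n hn hp2]; ring
  have e4 : m - 1 + 1 = m := by ring
  have e5 : (IntSet n (m + (p : ZMod n) + 1) (n - p - 2 + 1))ᶜ = IntSet n m (p + 1) := by
    rw [← compl_I n hn m p hp1 hp2, compl_compl]
  rw [e1, e2, e4, e5]

lemma termLs_compl (n : ℕ) (hn : 4 ≤ n) (m : ZMod n) (p : ℕ) (hp1 : 1 ≤ p)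
    (hp2 : p ≤ n - 3) :
    termLs n hn (m + (p : ZMod n) + 1) (n - p - 2) = termLs n hn m p := by
  unfold termLs
  rw [FL_compl n hn m p hp1 hp2]

lemma termKs_compl (n : ℕ) (hn : 4 ≤ n) (m : ZMod n) (p : ℕ) (hp1 : 1 ≤ p)
    (hp2 : p ≤ n - 3) :
    termKs n hn (m + (p : ZMod n) + 1) (n - p - 2) = termKs n hn m p := by
  haveI : NeZero n := ⟨by omega⟩
  unfold termKs
  refine Finset.sum_nbij' (fun A => complIdx n hn A) (fun A => complIdx n hn A)
    ?_ ?_ ?_ ?_ ?_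
  · intro A hA
    rw [mem_FK_compl n hn hp1 hp2] at hA
    obtain ⟨k1, k2, k3, k4, k5⟩ := hA
    rw [mem_FK n hn]
    have hval : ((complIdx n hn A) : DivIdx n).val = A.valᶜ := rfl
    rw [hval]
    refine ⟨Finset.mem_compl.mpr k4, Finset.mem_compl.mpr k3, ?_, ?_, ?_⟩
    · simp only [Finset.mem_compl, not_not]; exact k2
    · simp only [Finset.mem_compl, not_not]; exact k1
    · intro hc
      exact k5 (by rw [← compl_compl A.val, hc, compl_compl])
  · intro A hA
    rw [mem_FK n hn] at hA
    obtain ⟨k1, k2, k3, k4, k5⟩ := hA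
    rw [mem_FK_compl n hn hp1 hp2]
    have hval : ((complIdx n hn A) : DivIdx n).val = A.valᶜ := rfl
    rw [hval]
    refine ⟨Finset.mem_compl.mpr k4, Finset.mem_compl.mpr k3, ?_, ?_, ?_⟩
    · simp only [Finset.mem_compl, not_not]; exact k2
    · simp only [Finset.mem_compl, not_not]; exact k1
    · intro hc
      exact k5 (by rw [← compl_compl A.val, hc])
  · intro A _; exact Subtype.ext (compl_compl A.val)
  · intro A _; exact Subtype.ext (compl_compl A.val)
  · intro A _
    exact congrArg FreeAbelianGroup.of
      (starIdx_compl n hn A.prop (complIdx n hn A).prop).symm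

lemma T_compl (n : ℕ) (hn : 4 ≤ n) (m : ZMod n) (p : ℕ) (hp1 : 1 ≤ p) (hp2 : p ≤ n - 3) :
    T n hn (m + (p : ZMod n) + 1) (n - p - 2) = T n hn m p := by
  unfold T
  rw [termLs_compl n hn m p hp1 hp2, termKs_compl n hn m p hp1 hp2]

end NP

namespace NP

lemma T_congr' (n : ℕ) (hn : 4 ≤ n) [NeZero n] {m m' : ZMod n} {p p' : ℕ}
    (hp1 : 1 ≤ p) (hp2 : p ≤ n - 3) (hp1' : 1 ≤ p') (hp2' : p' ≤ n - 3)
    (h : IntSet n m (p + 1) = IntSet n m' (p' + 1) ∨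
      IntSet n m (p + 1) = (IntSet n m' (p' + 1))ᶜ) :
    T n hn m p = T n hn m' p' := by
  haveI : NeZero n := ⟨by omega⟩
  rcases h with h | h
  · obtain ⟨hm, hk⟩ := intSet_inj (by omega) (by omega) (by omega) (by omega) h
    rw [hm, show p = p' by omega]
  · rw [compl_I n hn m' p' hp1' hp2'] at h
    obtain ⟨hm, hk⟩ := intSet_inj (by omega) (by omega) (by omega) (by omega) h
    have hp : p = n - p' - 2 := by omega
    rw [hm, hp]
    exact T_compl n hn m' p' hp1' hp2'

lemma T_congr (n : ℕ) (hn : 4 ≤ n) {m m' : ZMod n} {p p' : ℕ}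
    (hp1 : 1 ≤ p) (hp2 : p ≤ n - 3) (hp1' : 1 ≤ p') (hp2' : p' ≤ n - 3)
    {pf : 2 ≤ (IntSet n m (p + 1)).card ∧ (IntSet n m (p + 1)).card ≤ n - 2}
    {pf' : 2 ≤ (IntSet n m' (p' + 1)).card ∧ (IntSet n m' (p' + 1)).card ≤ n - 2}
    (h : starIdx n hn (IntSet n m (p + 1)) pf = starIdx n hn (IntSet n m' (p' + 1)) pf') :
    T n hn m p = T n hn m' p' := by
  haveI : NeZero n := ⟨by omega⟩
  have hv := congrArg Subtype.val h
  rw [starIdx_val, starIdx_val] at hv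
  apply T_congr' n hn hp1 hp2 hp1' hp2'
  by_cases h0 : (0 : ZMod n) ∈ IntSet n m (p + 1) <;>
    by_cases h0' : (0 : ZMod n) ∈ IntSet n m' (p' + 1)
  · rw [if_pos h0, if_pos h0'] at hv; exact Or.inl hv
  · rw [if_pos h0, if_neg h0'] at hv; exact Or.inr hv
  · rw [if_neg h0, if_pos h0'] at hv
    exact Or.inr (by rw [← hv, compl_compl])
  · rw [if_neg h0, if_neg h0'] at hv
    exact Or.inl (by rw [← compl_compl (IntSet n m (p+1)), hv, compl_compl])

lemma rep_exists (n : ℕ) (hn : 4 ≤ n) (A : D0Idx n) (h : IsCyclicInterval A.val) :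
    ∃ mp : ZMod n × ℕ, 1 ≤ mp.2 ∧ mp.2 ≤ n - 3 ∧ IntSet n mp.1 (mp.2 + 1) = A.val := by
  haveI : NeZero n := ⟨by omega⟩
  obtain ⟨a, ha⟩ := (isCyclicInterval_iff A.prop.2.1 A.prop.2.2).mp h
  have h2 := A.prop.2.1
  have h3 := A.prop.2.2
  refine ⟨(a, A.val.card - 1), by omega, by omega, ?_⟩
  rw [show A.val.card - 1 + 1 = A.val.card by omega]
  exact ha.symm

noncomputable def fAux (n : ℕ) (hn : 4 ≤ n) (A : D0Idx n) : FreeAbelianGroup (NAsub n) :=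
  if h : IsCyclicInterval A.val then
    T n hn (Classical.choose (rep_exists n hn A h)).1 (Classical.choose (rep_exists n hn A h)).2
  else FreeAbelianGroup.of (⟨A, h⟩ : NAsub n)

noncomputable def phi (n : ℕ) (hn : 4 ≤ n) :
    FreeAbelianGroup (D0Idx n) →+ FreeAbelianGroup (NAsub n) :=
  FreeAbelianGroup.lift (fAux n hn)

lemma fAux_star (n : ℕ) (hn : 4 ≤ n) [NeZero n] (m : ZMod n) (p : ℕ) (hp1 : 1 ≤ p)
    (hp2 : p ≤ n - 3)
    (pf : 2 ≤ (IntSet n m (p + 1)).card ∧ (IntSet n m (p + 1)).card ≤ n - 2) :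
    fAux n hn (starIdx n hn (IntSet n m (p + 1)) pf) = T n hn m p := by
  set A := starIdx n hn (IntSet n m (p + 1)) pf with hA
  have hInt : IsCyclicInterval A.val :=
    starIdx_interval n hn pf (intSet_isCyclicInterval (by omega))
  rw [fAux, dif_pos hInt]
  obtain ⟨h1, h2, h3⟩ := Classical.choose_spec (rep_exists n hn A hInt)
  set m₀ := (Classical.choose (rep_exists n hn A hInt)).1
  set p₀ := (Classical.choose (rep_exists n hn A hInt)).2
  have h0 : (0 : ZMod n) ∈ A.val := A.prop.1
  -- A.val = I or Iᶜ
  have hv : A.val = if (0:ZMod n) ∈ IntSet n m (p+1) then IntSet n m (p+1)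
      else (IntSet n m (p+1))ᶜ := by rw [hA, starIdx_val]
  apply T_congr' n hn h1 h2 hp1 hp2
  by_cases hc : (0:ZMod n) ∈ IntSet n m (p+1)
  · rw [if_pos hc] at hv
    exact Or.inl (by rw [h3, hv])
  · rw [if_neg hc] at hv
    exact Or.inr (by rw [h3, hv])

lemma phi_termLs (n : ℕ) (hn : 4 ≤ n) (m : ZMod n) (p : ℕ) (hp1 : 1 ≤ p) (hp2 : p ≤ n - 3) :
    phi n hn (termLs n hn m p) = piNA n (termLs n hn m p) := by
  haveI : NeZero n := ⟨by omega⟩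
  rw [termLs, map_sum, map_sum]
  refine Finset.sum_congr rfl (fun A hA => ?_)
  have hni : ¬ IsCyclicInterval (starIdx n hn A.val A.prop).val :=
    starIdx_not_interval n hn A.prop (L_not_int n hn hp1 hp2 hA)
  rw [phi, FreeAbelianGroup.lift_apply_of, piNA, FreeAbelianGroup.lift_apply_of, fAux,
    dif_neg hni, dif_neg hni]

lemma phi_termKs (n : ℕ) (hn : 4 ≤ n) (m : ZMod n) (p : ℕ) (hp1 : 1 ≤ p) (hp2 : p ≤ n - 3) :
    phi n hn (termKs n hn m p) = piNA n (termKs n hn m p) := by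
  haveI : NeZero n := ⟨by omega⟩
  rw [termKs, map_sum, map_sum]
  refine Finset.sum_congr rfl (fun A hA => ?_)
  have hni : ¬ IsCyclicInterval (starIdx n hn A.val A.prop).val :=
    starIdx_not_interval n hn A.prop (K_not_int n hn hp1 hp2 hA)
  rw [phi, FreeAbelianGroup.lift_apply_of, piNA, FreeAbelianGroup.lift_apply_of, fAux,
    dif_neg hni, dif_neg hni]

lemma phi_rel (n : ℕ) (hn : 4 ≤ n) (m : ZMod n) (p : ℕ) (hp1 : 1 ≤ p) (hp2 : p ≤ n - 3) :
    phi n hn (relElt n hn m p hp1 hp2) = 0 := by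
  haveI : NeZero n := ⟨by omega⟩
  rw [relElt_eq n hn m p hp1 hp2, map_add, map_sub, phi_termLs n hn m p hp1 hp2,
    phi_termKs n hn m p hp1 hp2]
  rw [phi, FreeAbelianGroup.lift_apply_of, fAux_star n hn m p hp1 hp2]
  rw [T]
  abel

lemma rel_le_ker (n : ℕ) (hn : 4 ≤ n) : NewRelations n hn ≤ (phi n hn).ker := by
  rw [NewRelations, AddSubgroup.closure_le]
  rintro x ⟨m, p, hp1, hp2, rfl⟩
  exact AddMonoidHom.mem_ker.mpr (phi_rel n hn m p hp1 hp2)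

noncomputable def phiBar (n : ℕ) (hn : 4 ≤ n) :
    (FreeAbelianGroup (D0Idx n) ⧸ NewRelations n hn) →+ FreeAbelianGroup (NAsub n) :=
  QuotientAddGroup.lift (NewRelations n hn) (phi n hn) (rel_le_ker n hn)

noncomputable def psi (n : ℕ) (hn : 4 ≤ n) :
    FreeAbelianGroup (NAsub n) →+ (FreeAbelianGroup (D0Idx n) ⧸ NewRelations n hn) :=
  (QuotientAddGroup.mk' (NewRelations n hn)).comp (emb n)

lemma phiBar_psi (n : ℕ) (hn : 4 ≤ n) :
    (phiBar n hn).comp (psi n hn) = AddMonoidHom.id _ := by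
  ext j
  simp only [AddMonoidHom.comp_apply, AddMonoidHom.id_apply, psi, emb,
    AddMonoidHom.coe_comp, Function.comp_apply, FreeAbelianGroup.lift_apply_of]
  rw [QuotientAddGroup.mk'_apply, phiBar, QuotientAddGroup.lift_mk', phi,
    FreeAbelianGroup.lift_apply_of, fAux, dif_neg j.prop]
  rfl

lemma psi_phiBar (n : ℕ) (hn : 4 ≤ n) :
    (psi n hn).comp (phiBar n hn) = AddMonoidHom.id _ := by
  haveI : NeZero n := ⟨by omega⟩
  apply QuotientAddGroup.addMonoidHom_ext
  ext A
  simp only [AddMonoidHom.comp_apply, AddMonoidHom.id_apply]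
  rw [QuotientAddGroup.mk'_apply, phiBar, QuotientAddGroup.lift_mk', phi,
    FreeAbelianGroup.lift_apply_of]
  by_cases h : IsCyclicInterval A.val
  · rw [fAux, dif_pos h]
    obtain ⟨h1, h2, h3⟩ := Classical.choose_spec (rep_exists n hn A h)
    set m₀ := (Classical.choose (rep_exists n hn A h)).1
    set p₀ := (Classical.choose (rep_exists n hn A h)).2
    have pf : 2 ≤ (IntSet n m₀ (p₀ + 1)).card ∧ (IntSet n m₀ (p₀ + 1)).card ≤ n - 2 := by
      rw [card_intSet (by omega : p₀ + 1 ≤ n)]; omega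
    have hstar : starIdx n hn (IntSet n m₀ (p₀ + 1)) pf = A := by
      apply Subtype.ext
      rw [starIdx_val, if_pos (by rw [h3]; exact A.prop.1), h3]
    -- psi (T m₀ p₀) = mk (termLs - termKs)
    have hemb : emb n (T n hn m₀ p₀) = termLs n hn m₀ p₀ - termKs n hn m₀ p₀ := by
      rw [T, map_sub, emb_pi_termLs n hn m₀ p₀ h1 h2, emb_pi_termKs n hn m₀ p₀ h1 h2]
    rw [psi, AddMonoidHom.comp_apply, hemb]
    have hrel : relElt n hn m₀ p₀ h1 h2 ∈ NewRelations n hn :=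
      AddSubgroup.subset_closure ⟨m₀, p₀, h1, h2, rfl⟩
    have hkey : FreeAbelianGroup.of A - (termLs n hn m₀ p₀ - termKs n hn m₀ p₀)
        = relElt n hn m₀ p₀ h1 h2 := by
      rw [relElt_eq n hn m₀ p₀ h1 h2, hstar]
      abel
    rw [QuotientAddGroup.mk'_apply, QuotientAddGroup.eq]
    have : -(termLs n hn m₀ p₀ - termKs n hn m₀ p₀) + FreeAbelianGroup.of A
        = relElt n hn m₀ p₀ h1 h2 := by rw [← hkey]; abel
    rw [this]
    exact hrel
  · rw [fAux, dif_neg h, psi, AddMonoidHom.comp_apply, emb]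
    exact congrArg _ (FreeAbelianGroup.lift_apply_of _ _)

noncomputable def quotEquiv (n : ℕ) (hn : 4 ≤ n) :
    FreeAbelianGroup (NAsub n) ≃+ (FreeAbelianGroup (D0Idx n) ⧸ NewRelations n hn) :=
  AddMonoidHom.toAddEquiv (psi n hn) (phiBar n hn) (phiBar_psi n hn) (psi_phiBar n hn)

lemma quotEquiv_of (n : ℕ) (hn : 4 ≤ n) (j : NAsub n) :
    quotEquiv n hn (FreeAbelianGroup.of j)
      = QuotientAddGroup.mk (FreeAbelianGroup.of j.val) := by
  show psi n hn (FreeAbelianGroup.of j) = _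
  rw [psi, AddMonoidHom.comp_apply, emb, FreeAbelianGroup.lift_apply_of, QuotientAddGroup.mk'_apply]

end NP

namespace NP

lemma sum_Icc_aux (N : ℕ) : 2 * (∑ p ∈ Finset.Icc 1 N, (p + 1)) = N * (N + 3) := by
  induction N with
  | zero => simp
  | succ N ih =>
    rw [Finset.sum_Icc_succ_top (by omega)]
    have h : (N + 1) * (N + 1 + 3) = N * (N + 3) + 2 * N + 4 := by ring
    omega

lemma card_Int0 (n : ℕ) (hn : 4 ≤ n) [NeZero n] :
    2 * (Finset.univ.filter (fun A : Finset (ZMod n) =>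
      (0 : ZMod n) ∈ A ∧ 2 ≤ A.card ∧ A.card ≤ n - 2 ∧ IsCyclicInterval A)).card
      = n * (n - 3) := by
  have hbij : ((Finset.Icc 1 (n - 3)).sigma (fun p => Finset.range (p + 1))).card
      = (Finset.univ.filter (fun A : Finset (ZMod n) =>
        (0 : ZMod n) ∈ A ∧ 2 ≤ A.card ∧ A.card ≤ n - 2 ∧ IsCyclicInterval A)).card := by
    refine Finset.card_bij
      (fun q _ => IntSet n (-(q.2 : ZMod n)) (q.1 + 1)) ?_ ?_ ?_
    · intro q hq
      rw [Finset.mem_sigma, Finset.mem_Icc, Finset.mem_range] at hq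
      obtain ⟨⟨hq1, hq2⟩, hq3⟩ := hq
      rw [Finset.mem_filter]
      refine ⟨Finset.mem_univ _, ?_, ?_, ?_, intSet_isCyclicInterval (by omega)⟩
      · rw [mem_intSet (by omega : q.1 + 1 ≤ n)]
        have : (0 : ZMod n) - (-(q.2 : ZMod n)) = ((q.2 : ℕ) : ZMod n) := by ring
        rw [this, ZMod.val_cast_of_lt (by omega)]
        omega
      · rw [card_intSet (by omega : q.1 + 1 ≤ n)]; omega
      · rw [card_intSet (by omega : q.1 + 1 ≤ n)]; omega
    · intro q hq q' hq' heq
      rw [Finset.mem_sigma, Finset.mem_Icc, Finset.mem_range] at hq hq'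
      obtain ⟨⟨h11, h12⟩, h13⟩ := hq
      obtain ⟨⟨h21, h22⟩, h23⟩ := hq'
      obtain ⟨ha, hk⟩ := intSet_inj (by omega) (by omega) (by omega) (by omega) heq
      have hq2 : q.2 = q'.2 := by
        have : ((q.2 : ℕ) : ZMod n) = ((q'.2 : ℕ) : ZMod n) := by
          have := neg_injective ha; exact this
        have := (ZMod.natCast_eq_natCast_iff' _ _ _).mp this
        rwa [Nat.mod_eq_of_lt (by omega), Nat.mod_eq_of_lt (by omega)] at this
      have hq1 : q.1 = q'.1 := by omega
      exact Sigma.ext hq1 (by rw [hq2])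
    · intro A hA
      rw [Finset.mem_filter] at hA
      obtain ⟨-, h0, h2, h3, hI⟩ := hA
      obtain ⟨a, ha⟩ := (isCyclicInterval_iff h2 h3).mp hI
      have hval : ((0 : ZMod n) - a).val < A.card := by
        rw [← mem_intSet (by omega : A.card ≤ n), ← ha]; exact h0
      refine ⟨⟨A.card - 1, ((0 : ZMod n) - a).val⟩, ?_, ?_⟩
      · simp only [Finset.mem_sigma, Finset.mem_Icc, Finset.mem_range]
        exact ⟨⟨by omega, by omega⟩, by omega⟩
      · show IntSet n (-((((0 : ZMod n) - a).val : ℕ) : ZMod n)) (A.card - 1 + 1) = A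
        have hcast : (((((0 : ZMod n) - a).val : ℕ)) : ZMod n) = (0 : ZMod n) - a :=
          ZMod.natCast_rightInverse _
        have hneg : -((((0 : ZMod n) - a).val : ℕ) : ZMod n) = a := by
          rw [hcast]; ring
        rw [hneg, show A.card - 1 + 1 = A.card by omega]
        exact ha.symm
  rw [← hbij, Finset.card_sigma]
  simp only [Finset.card_range]
  rw [sum_Icc_aux]
  rw [show n - 3 + 3 = n by omega, mul_comm]

lemma card_D0count (n : ℕ) (hn : 4 ≤ n) [NeZero n] :
    (Finset.univ.filter (fun A : Finset (ZMod n) =>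
      (0 : ZMod n) ∈ A ∧ 2 ≤ A.card ∧ A.card ≤ n - 2)).card + (n + 1) = 2 ^ (n - 1) := by
  set s0 := Finset.univ.erase (0 : ZMod n) with hs0def
  have hs0 : s0.card = n - 1 := by
    rw [hs0def, Finset.card_erase_of_mem (Finset.mem_univ _), Finset.card_univ, ZMod.card]
  have hbij : (Finset.univ.filter (fun A : Finset (ZMod n) =>
      (0 : ZMod n) ∈ A ∧ 2 ≤ A.card ∧ A.card ≤ n - 2)).card
      = (s0.powerset.filter (fun B => 1 ≤ B.card ∧ B.card ≤ n - 3)).card := by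
    refine Finset.card_bij (fun A _ => A.erase (0 : ZMod n)) ?_ ?_ ?_
    · intro A hA
      rw [Finset.mem_filter] at hA
      obtain ⟨-, h0, h2, h3⟩ := hA
      rw [Finset.mem_filter, Finset.mem_powerset]
      have hcard : (A.erase (0 : ZMod n)).card = A.card - 1 :=
        Finset.card_erase_of_mem h0
      exact ⟨Finset.erase_subset_erase _ (Finset.subset_univ A), by omega, by omega⟩
    · intro A hA A' hA' heq
      rw [Finset.mem_filter] at hA hA'
      rw [← Finset.insert_erase hA.2.1, ← Finset.insert_erase hA'.2.1, heq]
    · intro B hB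
      rw [Finset.mem_filter, Finset.mem_powerset] at hB
      obtain ⟨hsub, hb1, hb2⟩ := hB
      have h0B : (0 : ZMod n) ∉ B := fun h => Finset.notMem_erase _ _ (hsub h)
      refine ⟨insert (0 : ZMod n) B, ?_, Finset.erase_insert h0B⟩
      rw [Finset.mem_filter]
      have hcard : (insert (0 : ZMod n) B).card = B.card + 1 :=
        Finset.card_insert_of_notMem h0B
      exact ⟨Finset.mem_univ _, Finset.mem_insert_self _ _, by omega, by omega⟩
  rw [hbij]
  have hsplit := Finset.card_filter_add_card_filter_not
    (s := s0.powerset) (p := fun B => 1 ≤ B.card ∧ B.card ≤ n - 3)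
  rw [Finset.card_powerset, hs0] at hsplit
  have hneg : s0.powerset.filter (fun B => ¬(1 ≤ B.card ∧ B.card ≤ n - 3))
      = s0.powerset.filter (fun B => B.card = 0 ∨ B.card = n - 2 ∨ B.card = n - 1) := by
    apply Finset.filter_congr
    intro B hB
    have hle : B.card ≤ n - 1 := by
      rw [← hs0]; exact Finset.card_le_card (Finset.mem_powerset.mp hB)
    constructor
    · intro h; omega
    · intro h; omega
  have hcard0 : (s0.powerset.filter (fun B => B.card = 0)).card = 1 := by
    rw [← Finset.powersetCard_eq_filter, Finset.card_powersetCard, Nat.choose_zero_right]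
  have hcard2 : (s0.powerset.filter (fun B => B.card = n - 2)).card = n - 1 := by
    rw [← Finset.powersetCard_eq_filter, Finset.card_powersetCard, hs0]
    have h1 : n - 2 = (n - 1) - 1 := by omega
    rw [h1, Nat.choose_symm (by omega), Nat.choose_one_right]
  have hcard1 : (s0.powerset.filter (fun B => B.card = n - 1)).card = 1 := by
    rw [← Finset.powersetCard_eq_filter, Finset.card_powersetCard, hs0, Nat.choose_self]
  have hor : s0.powerset.filter (fun B => B.card = 0 ∨ B.card = n - 2 ∨ B.card = n - 1)
      = (s0.powerset.filter (fun B => B.card = 0))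
        ∪ ((s0.powerset.filter (fun B => B.card = n - 2))
          ∪ (s0.powerset.filter (fun B => B.card = n - 1))) := by
    rw [← Finset.filter_or, ← Finset.filter_or]
  have hd1 : Disjoint (s0.powerset.filter (fun B => B.card = n - 2))
      (s0.powerset.filter (fun B => B.card = n - 1)) := by
    rw [Finset.disjoint_left]
    intro B hB hB'
    rw [Finset.mem_filter] at hB hB'
    omega
  have hd2 : Disjoint (s0.powerset.filter (fun B => B.card = 0))
      ((s0.powerset.filter (fun B => B.card = n - 2))
        ∪ (s0.powerset.filter (fun B => B.card = n - 1))) := by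
    rw [Finset.disjoint_left]
    intro B hB hB'
    rw [Finset.mem_union, Finset.mem_filter, Finset.mem_filter] at hB'
    rw [Finset.mem_filter] at hB
    omega
  have hnegcard : (s0.powerset.filter (fun B => ¬(1 ≤ B.card ∧ B.card ≤ n - 3))).card
      = n + 1 := by
    rw [hneg, hor, Finset.card_union_of_disjoint hd2, Finset.card_union_of_disjoint hd1,
      hcard0, hcard2, hcard1]
    omega
  omega

lemma card_NAIdx (n : ℕ) (hn : 4 ≤ n) [NeZero n] :
    Fintype.card (NAIdx n) = 2 ^ (n - 1) - 1 - n * (n - 1) / 2 := by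
  rw [Fintype.card_subtype]
  have hsplit := Finset.card_filter_add_card_filter_not
    (s := Finset.univ.filter (fun A : Finset (ZMod n) =>
      (0 : ZMod n) ∈ A ∧ 2 ≤ A.card ∧ A.card ≤ n - 2)) (p := fun A => IsCyclicInterval A)
  rw [Finset.filter_filter, Finset.filter_filter] at hsplit
  have e1 : Finset.univ.filter (fun A : Finset (ZMod n) =>
      ((0 : ZMod n) ∈ A ∧ 2 ≤ A.card ∧ A.card ≤ n - 2) ∧ IsCyclicInterval A)
      = Finset.univ.filter (fun A : Finset (ZMod n) =>
      (0 : ZMod n) ∈ A ∧ 2 ≤ A.card ∧ A.card ≤ n - 2 ∧ IsCyclicInterval A) :=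
    Finset.filter_congr (fun A _ => by tauto)
  have e2 : Finset.univ.filter (fun A : Finset (ZMod n) =>
      ((0 : ZMod n) ∈ A ∧ 2 ≤ A.card ∧ A.card ≤ n - 2) ∧ ¬ IsCyclicInterval A)
      = Finset.univ.filter (fun A : Finset (ZMod n) =>
      (0 : ZMod n) ∈ A ∧ 2 ≤ A.card ∧ A.card ≤ n - 2 ∧ ¬ IsCyclicInterval A) :=
    Finset.filter_congr (fun A _ => by tauto)
  rw [e1, e2] at hsplit
  have hInt := card_Int0 n hn
  have hD0 := card_D0count n hn
  have heven : 2 * (n * (n - 1) / 2) = n * (n - 1) := by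
    apply Nat.two_mul_div_two_of_even
    have h1 : Even ((n - 1) * ((n - 1) + 1)) := Nat.even_mul_succ_self _
    rw [show n - 1 + 1 = n by omega] at h1
    rwa [mul_comm] at h1
  have hmul : n * (n - 1) = n * (n - 3) + 2 * n := by
    rw [show n - 1 = n - 3 + 2 by omega]
    ring
  omega

end NP
/-- `F'/R'` is a free abelian group, and the images of the generators
`δ_A` with `A` non-adjacent form a ℤ-basis; in particular `F'/R'` has rank
`2^(n−1) − 1 − n(n−1)/2`. -/
theorem new_presentation_free (n : ℕ) (hn : 4 ≤ n) :
    (∃ b : Module.Basis (NAIdx n) ℤ (FreeAbelianGroup (D0Idx n) ⧸ NewRelations n hn),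
      ∀ A : NAIdx n, b A = QuotientAddGroup.mk
        (FreeAbelianGroup.of
          (⟨A.val, A.prop.1, A.prop.2.1, A.prop.2.2.1⟩ : D0Idx n))) ∧
    Module.finrank ℤ (FreeAbelianGroup (D0Idx n) ⧸ NewRelations n hn)
      = 2 ^ (n - 1) - 1 - n * (n - 1) / 2 := by
  haveI : NeZero n := ⟨by omega⟩
  let eNA : NP.NAsub n ≃ NAIdx n :=
    { toFun := fun A => ⟨A.val.val, A.val.prop.1, A.val.prop.2.1, A.val.prop.2.2, A.prop⟩
      invFun := fun A => ⟨⟨A.val, A.prop.1, A.prop.2.1, A.prop.2.2.1⟩, A.prop.2.2.2⟩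
      left_inv := fun A => rfl
      right_inv := fun A => rfl }
  let e := NP.quotEquiv n hn
  let b : Module.Basis (NAIdx n) ℤ (FreeAbelianGroup (D0Idx n) ⧸ NewRelations n hn) :=
    ((FreeAbelianGroup.basis (NP.NAsub n)).map e.toIntLinearEquiv).reindex eNA
  have hb : ∀ A : NAIdx n, b A = QuotientAddGroup.mk
      (FreeAbelianGroup.of (⟨A.val, A.prop.1, A.prop.2.1, A.prop.2.2.1⟩ : D0Idx n)) := by
    intro A
    show (((FreeAbelianGroup.basis (NP.NAsub n)).map e.toIntLinearEquiv).reindex eNA) A = _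
    rw [Module.Basis.reindex_apply, Module.Basis.map_apply]
    have hbasis : (FreeAbelianGroup.basis (NP.NAsub n)) (eNA.symm A)
        = FreeAbelianGroup.of (eNA.symm A) := by
      simp [FreeAbelianGroup.basis, Finsupp.toFreeAbelianGroup, Finsupp.liftAddHom]
    rw [hbasis]
    exact NP.quotEquiv_of n hn (eNA.symm A)
  refine ⟨⟨b, hb⟩, ?_⟩
  rw [Module.finrank_eq_card_basis b]
  exact NP.card_NAIdx n hn
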